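/- Let n ≥ 4 and let λ₁, …, λₙ be real numbers with λ₁ + ⋯ + λₙ = 0. Writing pₖ = σₖ(λ)/C(n,k), one has the identity C(n,4)·(p₄ + 3p₂²) = −(1/4)·(Σᵢ λᵢ⁴ − ((n² − 3n + 3)/(n(n − 1)))·(Σᵢ λᵢ²)²). -/
import Mathlib

open Finset

/-- The `k`-th elementary symmetric polynomial of `lam 0, …, lam (n-1)`. -/
noncomputable def esymm {n : ℕ} (k : ℕ) (lam : Fin n → ℝ) : ℝ :=
  ∑ s ∈ (Finset.univ : Finset (Fin n)).powersetCard k, ∏ i ∈ s, lam i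

/-- The normalized elementary symmetric function `p k = σ k / C(n,k)`. -/
noncomputable def p {n : ℕ} (k : ℕ) (lam : Fin n → ℝ) : ℝ :=
  esymm k lam / (n.choose k)

lemma esymm_eq_aeval {n : ℕ} (k : ℕ) (lam : Fin n → ℝ) :
    esymm k lam = MvPolynomial.aeval lam (MvPolynomial.esymm (Fin n) ℝ k) := by
  simp [esymm, MvPolynomial.esymm, map_sum]

lemma newton {n k : ℕ} (lam : Fin n → ℝ) :
    (k : ℝ) * esymm k lam = (-1) ^ (k + 1) *
      ∑ a ∈ antidiagonal k with a.1 < k,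
        (-1) ^ a.1 * esymm a.1 lam * ∑ i, lam i ^ a.2 := by
  have h := congrArg (MvPolynomial.aeval lam) (MvPolynomial.mul_esymm_eq_sum (Fin n) ℝ k)
  simpa [map_sum, esymm_eq_aeval, MvPolynomial.psum, mul_comm] using h

lemma esymm_one {n : ℕ} (lam : Fin n → ℝ) : esymm 1 lam = ∑ i, lam i := by
  simp [esymm, Finset.powersetCard_one]

lemma key {n : ℕ} (lam : Fin n → ℝ) (hs : ∑ i, lam i = 0) :
    (2:ℝ) * esymm 2 lam = -(∑ i, lam i ^ 2) ∧
    (4:ℝ) * esymm 4 lam = -(∑ i, lam i ^ 4) - esymm 2 lam * ∑ i, lam i ^ 2 := by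
  have h1 : esymm 1 lam = 0 := by rw [esymm_one, hs]
  have e2 : ({a ∈ antidiagonal 2 | a.1 < 2} : Finset (ℕ×ℕ)) = {(0,2),(1,1)} := by decide
  have e4 : ({a ∈ antidiagonal 4 | a.1 < 4} : Finset (ℕ×ℕ)) = {(0,4),(1,3),(2,2),(3,1)} := by decide
  have h2 := newton (k := 2) lam
  have h4 := newton (k := 4) lam
  rw [e2] at h2; rw [e4] at h4
  norm_num [Finset.sum_insert, esymm, h1, hs] at h2 h4
  constructor
  · simpa [esymm] using h2
  · simp only [esymm] at *
    rw [h1, zero_mul, add_zero] at h4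
    linarith

theorem choose_four_p4_identity (n : ℕ) (hn : 4 ≤ n) (lam : Fin n → ℝ)
    (hsum : ∑ i, lam i = 0) :
    (n.choose 4 : ℝ) * (p 4 lam + 3 * p 2 lam ^ 2) =
      -(1 / 4) * ((∑ i, lam i ^ 4) -
        ((n : ℝ) ^ 2 - 3 * n + 3) / (n * (n - 1)) * (∑ i, lam i ^ 2) ^ 2) := by
  obtain ⟨h2, h4⟩ := key lam hsum
  set S2 := ∑ i, lam i ^ 2 with hS2
  set S4 := ∑ i, lam i ^ 4 with hS4
  have hN : (4:ℝ) ≤ (n:ℝ) := by exact_mod_cast hn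
  have hc2 : ((n.choose 2 : ℕ) : ℝ) = (n:ℝ) * ((n:ℝ) - 1) / 2 := Nat.cast_choose_two ℝ n
  have hc4 : ((n.choose 4 : ℕ) : ℝ) = (n:ℝ) * ((n:ℝ)-1) * ((n:ℝ)-2) * ((n:ℝ)-3) / 24 := by
    have h := Nat.descFactorial_eq_factorial_mul_choose n 4
    have h3 : 3 ≤ n := by omega
    have h2' : 2 ≤ n := by omega
    have h1' : 1 ≤ n := by omega
    have hcast : (n.descFactorial 4 : ℝ) = 24 * (n.choose 4 : ℝ) := by
      exact_mod_cast congrArg (Nat.cast : ℕ → ℝ) h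
    rw [show Nat.descFactorial n 4 = (n-3)*((n-2)*((n-1)*n)) from by
      simp [Nat.descFactorial, Nat.mul_comm]] at hcast
    push_cast [Nat.cast_sub h3, Nat.cast_sub h2', Nat.cast_sub h1'] at hcast
    linarith
  have he2 : esymm 2 lam = -S2 / 2 := by linarith
  have he4 : esymm 4 lam = S2 ^ 2 / 8 - S4 / 4 := by
    rw [he2] at h4; nlinarith [h4]
  have h0 : (n:ℝ) ≠ 0 := by linarith
  have h1 : (n:ℝ) - 1 ≠ 0 := by intro h; linarith
  have h2n : (n:ℝ) - 2 ≠ 0 := by intro h; linarith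
  have h3n : (n:ℝ) - 3 ≠ 0 := by intro h; linarith
  rw [p, p, he2, he4, hc2, hc4]
  field_simp
  ring
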